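/- arXiv:2012.09002 — 3 statements merged into one kernel-verified Lean document; each statement's English description precedes it below -/
import Mathlib

section
/- (Classical module-theoretic specialization of the Bazzoni characterization) Let R be a ring and T a right R-module with projective dimension at most 1. Then T is a 1-tilting module (i.e., pd T ≤ 1, Ext^1_R(T, T^{(λ)}) = 0 for every cardinal λ, and there is an exact sequence 0 → R → T₀ → T₁ → 0 with T₀, T₁ ∈ Add T) if and only if Gen₁(T) := {M : there is an epimorphism T^{(λ)} → M whose kernel lies in Gen(T)} equals T^⊥ := {M : Ext^1_R(T,M) = 0}; equivalently T is 1-tilting if and only if T^⊥ = Pres(T), the class of modules admitting an exact sequence T^{(λ)} → T^{(μ)} → M → 0. -/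
open CategoryTheory

variable (R : Type) [Ring R]

/-- `Ext¹_R(T, M) = 0`: every short exact sequence `0 → M → B → T → 0` splits. -/
def Ext1Zero (T M : ModuleCat R) : Prop :=
  ∀ (B : ModuleCat R) (i : M ⟶ B) (p : B ⟶ T),
    Function.Injective i → Function.Surjective p →
    LinearMap.range i.hom = LinearMap.ker p.hom →
    ∃ s : T ⟶ B, s ≫ p = 𝟙 T

/-- `M ∈ Add T`: `M` is a direct summand of a direct sum of copies of `T`. -/
def InAddM (T M : ModuleCat R) : Prop :=
  ∃ (ι : Type) (i : M ⟶ ModuleCat.of R (ι →₀ T)) (r : ModuleCat.of R (ι →₀ T) ⟶ M),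
    i ≫ r = 𝟙 M

/-- `M ∈ Gen(T)`: `M` is an epimorphic image of a direct sum of copies of `T`. -/
def GenM (T M : ModuleCat R) : Prop :=
  ∃ (ι : Type) (f : ModuleCat.of R (ι →₀ T) ⟶ M), Function.Surjective f

/-- `M ∈ Pres(T) = Gen₁(T)`: there is an epimorphism `T^{(ι)} → M` whose kernel lies
in `Gen(T)`; equivalently `M` has a presentation `T^{(λ)} → T^{(μ)} → M → 0`. -/
def PresM (T M : ModuleCat R) : Prop :=
  ∃ (ι : Type) (f : ModuleCat.of R (ι →₀ T) ⟶ M),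
    Function.Surjective f ∧ GenM R T (ModuleCat.of R (LinearMap.ker f.hom))

/-- `pd T ≤ 1`: `T` admits a projective resolution `0 → P₁ → P₀ → T → 0`. -/
def PdLeOneM (T : ModuleCat R) : Prop :=
  ∃ (P₁ P₀ : ModuleCat R) (i : P₁ ⟶ P₀) (p : P₀ ⟶ T),
    Projective P₁ ∧ Projective P₀ ∧
    Function.Injective i ∧ Function.Surjective p ∧
    LinearMap.range i.hom = LinearMap.ker p.hom

/-- `T` is a 1-tilting module: `pd T ≤ 1`, `Ext¹(T, T^{(λ)}) = 0` for every cardinal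
`λ`, and there is an exact sequence `0 → R → T₀ → T₁ → 0` with `T₀, T₁ ∈ Add T`. -/
def IsTiltingM (T : ModuleCat R) : Prop :=
  PdLeOneM R T ∧
  (∀ ι : Type, Ext1Zero R T (ModuleCat.of R (ι →₀ T))) ∧
  ∃ (T₀ T₁ : ModuleCat R) (i : ModuleCat.of R R ⟶ T₀) (p : T₀ ⟶ T₁),
    Function.Injective i ∧ Function.Surjective p ∧
    LinearMap.range i.hom = LinearMap.ker p.hom ∧ InAddM R T T₀ ∧ InAddM R T T₁


section Aux
variable {R}
section Plain
variable {A B M X Y : Type} [AddCommGroup A] [Module R A] [AddCommGroup B] [Module R B]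
  [AddCommGroup M] [Module R M] [AddCommGroup X] [Module R X] [AddCommGroup Y] [Module R Y]

/-- Factor a map through a surjection. -/
theorem ffact (p : A →ₗ[R] X) (hp : Function.Surjective p)
    (f : A →ₗ[R] Y) (h : LinearMap.ker p ≤ LinearMap.ker f) :
    ∃ g : X →ₗ[R] Y, g.comp p = f := by
  let e := p.quotKerEquivOfSurjective hp
  refine ⟨(LinearMap.ker p).liftQ f h ∘ₗ (e.symm : X →ₗ[R] _), ?_⟩
  ext a
  simp only [LinearMap.comp_apply, LinearEquiv.coe_coe]
  have : e.symm (p a) = Submodule.Quotient.mk a := by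
    rw [LinearEquiv.symm_apply_eq]; rfl
  rw [this]; rfl

theorem retrOfSplit (p : B →ₗ[R] X) (iM : M →ₗ[R] B) (hinj : Function.Injective iM)
    (hker : LinearMap.range iM = LinearMap.ker p)
    (s : X →ₗ[R] B) (hs : p.comp s = LinearMap.id) :
    ∃ ρ : B →ₗ[R] M, ρ.comp iM = LinearMap.id := by
  have hmem : ∀ b : B, b - s (p b) ∈ LinearMap.range iM := by
    intro b
    rw [hker, LinearMap.mem_ker, map_sub]
    have : p (s (p b)) = p b := LinearMap.congr_fun hs (p b)
    rw [this, sub_self]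
  let e := LinearEquiv.ofInjective iM hinj
  refine ⟨(e.symm : LinearMap.range iM →ₗ[R] M).comp
      ((LinearMap.id - s.comp p).codRestrict _ hmem), ?_⟩
  ext m
  simp only [LinearMap.comp_apply, LinearMap.codRestrict_apply, LinearMap.sub_apply,
    LinearMap.id_apply, LinearEquiv.coe_coe]
  have h0 : p (iM m) = 0 := by
    rw [← LinearMap.mem_ker, ← hker]; exact ⟨m, rfl⟩
  have he : ∀ (x : B) (hx : x ∈ LinearMap.range iM), x = iM m →
      e.symm ⟨x, hx⟩ = m := by
    intro x hx hm
    apply hinj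
    have := e.apply_symm_apply ⟨x, hx⟩
    have h2 : iM (e.symm ⟨x, hx⟩) = x := congrArg Subtype.val this
    rw [h2, hm]
  apply he
  simp [h0]

theorem splitOfRetr (p : B →ₗ[R] X) (hp : Function.Surjective p) (iM : M →ₗ[R] B)
    (hker : LinearMap.range iM = LinearMap.ker p)
    (ρ : B →ₗ[R] M) (hρ : ρ.comp iM = LinearMap.id) :
    ∃ s : X →ₗ[R] B, p.comp s = LinearMap.id := by
  set σ : B →ₗ[R] B := LinearMap.id - iM.comp ρ with hσ
  have hkill : LinearMap.ker p ≤ LinearMap.ker σ := by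
    intro b hb
    rw [← hker] at hb
    obtain ⟨m, rfl⟩ := hb
    have : ρ (iM m) = m := LinearMap.congr_fun hρ m
    simp [hσ, this]
  obtain ⟨s, hs⟩ := ffact p hp σ hkill
  refine ⟨s, ?_⟩
  have hpiM : ∀ m, p (iM m) = 0 := by
    intro m; rw [← LinearMap.mem_ker, ← hker]; exact ⟨m, rfl⟩
  apply LinearMap.ext
  intro x
  obtain ⟨b, rfl⟩ := hp x
  have h1 : s (p b) = σ b := LinearMap.congr_fun hs b
  simp only [LinearMap.comp_apply, LinearMap.id_apply, h1, hσ, LinearMap.sub_apply,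
    map_sub, hpiM, sub_zero, LinearMap.id_apply]

end Plain

section Ext

/-- If every SES ending in `X` splits (with kernel `M`), we can lift any map `f : X → Y`
through any surjection `p : B → Y` with kernel `M`. -/
theorem extLift {M X : ModuleCat.{0} R} (h : Ext1Zero (R := R) X M) {Y B : Type} [AddCommGroup Y] [Module R Y]
    [AddCommGroup B] [Module R B]
    (f : ↑X →ₗ[R] Y) (p : B →ₗ[R] Y) (hp : Function.Surjective p)
    (iM : ↑M →ₗ[R] B) (hinj : Function.Injective iM)
    (hker : LinearMap.range iM = LinearMap.ker p) :
    ∃ s : ↑X →ₗ[R] B, p.comp s = f := by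
  set L : (↑X × B) →ₗ[R] Y := f.comp (LinearMap.fst R ↑X B) - p.comp (LinearMap.snd R ↑X B)
    with hL
  set Bt : Submodule R (↑X × B) := LinearMap.ker L with hBt
  have hmem : ∀ m : ↑M, ((0 : ↑X), iM m) ∈ Bt := by
    intro m
    have : p (iM m) = 0 := by
      rw [← LinearMap.mem_ker, ← hker]; exact ⟨m, rfl⟩
    simp [hBt, hL, this]
  set iM' : ↑M →ₗ[R] ↥Bt :=
    (((0 : ↑M →ₗ[R] ↑X).prod iM).codRestrict Bt (by intro m; simpa using hmem m)) with hiM'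
  set p' : ↥Bt →ₗ[R] ↑X := (LinearMap.fst R ↑X B).comp Bt.subtype with hp'
  have hinj' : Function.Injective iM' := by
    intro m₁ m₂ hm
    apply hinj
    have := congrArg (fun z : ↥Bt => (z : ↑X × B).2) hm
    simpa [hiM'] using this
  have hsurj' : Function.Surjective p' := by
    intro x
    obtain ⟨b, hb⟩ := hp (f x)
    exact ⟨⟨(x, b), by simp [hBt, hL, hb]⟩, rfl⟩
  have hker' : LinearMap.range iM' = LinearMap.ker p' := by
    apply le_antisymm
    · rintro _ ⟨m, rfl⟩
      simp [hp', hiM']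
    · rintro ⟨⟨x, b⟩, hxb⟩ hx
      have hx0 : x = 0 := hx
      have hpb : p b = 0 := by
        have h2 := hxb
        simp only [hBt, LinearMap.mem_ker, hL, LinearMap.sub_apply, LinearMap.comp_apply,
          LinearMap.fst_apply, LinearMap.snd_apply] at h2
        rw [hx0, map_zero] at h2
        simpa [sub_eq_zero, eq_comm] using h2
      have : b ∈ LinearMap.range iM := by rw [hker]; exact hpb
      obtain ⟨m, hm⟩ := this
      exact ⟨m, by ext <;> simp [hiM', hx0, hm]⟩
  obtain ⟨st, hst⟩ := h (ModuleCat.of R ↥Bt) (ModuleCat.ofHom iM') (ModuleCat.ofHom p') hinj' hsurj' hker'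
  refine ⟨(LinearMap.snd R ↑X B).comp (Bt.subtype.comp st.hom), ?_⟩
  ext x
  have hmem2 := (show ↥Bt from st.hom x).2
  simp only [hBt, LinearMap.mem_ker, hL, LinearMap.sub_apply, LinearMap.comp_apply,
    LinearMap.fst_apply, LinearMap.snd_apply, sub_eq_zero] at hmem2
  have hfst : ((show ↥Bt from st.hom x) : ↑X × B).1 = x := by
    have h3 := LinearMap.congr_fun
      (show p' ∘ₗ st.hom = LinearMap.id from congrArg ModuleCat.Hom.hom hst) x
    simpa [hp'] using h3
  show p ((show ↥Bt from st.hom x) : ↑X × B).2 = f x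
  rw [← hmem2, hfst]
end Ext

section Ext2
variable {T M X Y A' A'' : ModuleCat.{0} R}

theorem extRetract (h : Ext1Zero (R := R) X M) (iY : Y ⟶ X) (rY : X ⟶ Y)
    (hr : iY ≫ rY = 𝟙 Y) : Ext1Zero (R := R) Y M := by
  intro B iM p hinj hsurj hker
  obtain ⟨s₀, hs₀⟩ := extLift h (Y := ↑Y) (B := ↑B) (show ↑X →ₗ[R] ↑Y from rY.hom) (show ↑B →ₗ[R] ↑Y from p.hom) hsurj iM.hom hinj hker
  refine ⟨ModuleCat.ofHom (s₀.comp (show ↑Y →ₗ[R] ↑X from iY.hom)), ?_⟩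
  apply ModuleCat.hom_ext
  show (show ↑B →ₗ[R] ↑Y from p.hom) ∘ₗ (s₀ ∘ₗ (show ↑Y →ₗ[R] ↑X from iY.hom)) = LinearMap.id
  ext y
  have h1 : p (s₀ (iY y)) = rY (iY y) := LinearMap.congr_fun hs₀ (iY y)
  have h2 : rY (iY y) = y :=
    LinearMap.congr_fun (show (show ↑X →ₗ[R] ↑Y from rY.hom) ∘ₗ (show ↑Y →ₗ[R] ↑X from iY.hom) = LinearMap.id from congrArg ModuleCat.Hom.hom hr) y
  exact h1.trans h2

theorem extFinsupp (h : Ext1Zero (R := R) T M) (ι : Type) :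
    Ext1Zero (R := R) (ModuleCat.of R (ι →₀ ↑T)) M := by
  intro B iM p hinj hsurj hker
  have key : ∀ a : ι, ∃ s : ↑T →ₗ[R] ↑B,
      (show ↑B →ₗ[R] (ι →₀ ↑T) from p.hom).comp s = Finsupp.lsingle a :=
    fun a => extLift h (Y := (ι →₀ ↑T)) (B := ↑B) (Finsupp.lsingle a) (show ↑B →ₗ[R] (ι →₀ ↑T) from p.hom) hsurj iM.hom hinj hker
  choose sa hsa using key
  refine ⟨ModuleCat.ofHom (Finsupp.lsum ℕ sa : (ι →₀ ↑T) →ₗ[R] ↑B), ?_⟩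
  apply ModuleCat.hom_ext
  show (show ↑B →ₗ[R] (ι →₀ ↑T) from p.hom) ∘ₗ (Finsupp.lsum ℕ sa) = LinearMap.id
  apply Finsupp.lhom_ext
  intro a t
  have h1 : p (sa a t) = Finsupp.single a t := LinearMap.congr_fun (hsa a) t
  simp only [LinearMap.comp_apply, LinearMap.id_apply]
  rw [show (Finsupp.lsum ℕ sa) (Finsupp.single a t) = sa a t from Finsupp.lsum_single _ _ _ _]
  exact h1

theorem extProjR (M : ModuleCat R) : Ext1Zero (R := R) (ModuleCat.of R R) M := by
  intro B iM p hinj hsurj hker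
  obtain ⟨b, hb⟩ := hsurj (1 : R)
  refine ⟨ModuleCat.ofHom (LinearMap.toSpanSingleton R ↑B b), ?_⟩
  apply ModuleCat.hom_ext
  show (show ↑B →ₗ[R] R from p.hom) ∘ₗ LinearMap.toSpanSingleton R ↑B b = LinearMap.id
  apply LinearMap.ext; intro r
  show p (r • b) = r
  rw [map_smul, hb, smul_eq_mul, mul_one]

theorem extTwo (j : A' ⟶ X) (q : X ⟶ A'') (hjinj : Function.Injective j)
    (hqsurj : Function.Surjective q) (hjq : LinearMap.range j.hom = LinearMap.ker q.hom)
    (hA' : Ext1Zero (R := R) A' M) (hA'' : Ext1Zero (R := R) A'' M) :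
    Ext1Zero (R := R) X M := by
  intro B iM p hinj hsurj hker
  obtain ⟨s'', hs''⟩ := extLift hA' (Y := ↑X) (B := ↑B) (show ↑A' →ₗ[R] ↑X from j.hom) (show ↑B →ₗ[R] ↑X from p.hom) hsurj iM.hom hinj hker
  set N : Submodule R ↑B := LinearMap.range s'' with hN
  set π : ↑B →ₗ[R] (↑B ⧸ N) := N.mkQ with hπ
  have hple : N ≤ LinearMap.ker ((show ↑X →ₗ[R] ↑A'' from q.hom).comp (show ↑B →ₗ[R] ↑X from p.hom)) := by
    rintro _ ⟨a, rfl⟩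
    have h1 : p (s'' a) = j a := LinearMap.congr_fun hs'' a
    have h2 : q (j a) = 0 := by
      rw [← LinearMap.mem_ker, ← hjq]; exact ⟨a, rfl⟩
    simp [LinearMap.mem_ker, h1, h2]
  set pbar : (↑B ⧸ N) →ₗ[R] ↑A'' := N.liftQ _ hple with hpbar
  have hpbarπ : ∀ b : ↑B, pbar (π b) = q (p b) := fun b => rfl
  set iC : ↑M →ₗ[R] (↑B ⧸ N) := π.comp iM.hom with hiC
  have hpiM : ∀ m, p (iM m) = 0 := by
    intro m; rw [← LinearMap.mem_ker, ← hker]; exact ⟨m, rfl⟩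
  have hiCinj : Function.Injective iC := by
    intro m₁ m₂ hm
    apply hinj
    have : iM m₁ - iM m₂ ∈ N := by
      rw [← Submodule.Quotient.eq (p := N)]
      exact hm
    obtain ⟨a, ha⟩ := this
    have h1 : p (s'' a) = j a := LinearMap.congr_fun hs'' a
    have h2 : j a = 0 := by
      rw [← h1, ha, map_sub, hpiM, hpiM, sub_zero]
    have h3 : a = 0 := hjinj (by rw [h2, map_zero])
    have h4 : iM m₁ - iM m₂ = 0 := by rw [← ha, h3, map_zero]
    exact sub_eq_zero.mp h4
  have hpbarsurj : Function.Surjective pbar := by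
    intro a''
    obtain ⟨x, hx⟩ := hqsurj a''
    obtain ⟨b, hb⟩ := hsurj x
    exact ⟨π b, by rw [hpbarπ, hb, hx]⟩
  have hkerC : LinearMap.range iC = LinearMap.ker pbar := by
    apply le_antisymm
    · rintro _ ⟨m, rfl⟩
      show pbar (iC m) = 0
      rw [hiC]
      show pbar (π (iM m)) = 0
      rw [hpbarπ, hpiM, map_zero]
    · intro c hc
      obtain ⟨b, rfl⟩ := N.mkQ_surjective c
      have hqpb : q (p b) = 0 := by
        have := hc
        rw [LinearMap.mem_ker] at this
        rw [← hpbarπ]; exact this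
      have : p b ∈ LinearMap.range (show ↑A' →ₗ[R] ↑X from j.hom) := by rw [hjq]; exact hqpb
      obtain ⟨a, ha⟩ := this
      have h1 : p (s'' a) = j a := LinearMap.congr_fun hs'' a
      have hbs : b - s'' a ∈ LinearMap.ker (show ↑B →ₗ[R] ↑X from p.hom) := by
        rw [LinearMap.mem_ker, map_sub, h1, ha, sub_self]
      rw [← hker] at hbs
      obtain ⟨m, hm⟩ := hbs
      refine ⟨m, ?_⟩
      show π (iM m) = π b
      rw [hm, map_sub]
      have : π (s'' a) = 0 := by
        rw [hπ, Submodule.mkQ_apply, Submodule.Quotient.mk_eq_zero]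
        exact ⟨a, rfl⟩
      rw [this, sub_zero]
  obtain ⟨σ, hσ⟩ := hA'' (ModuleCat.of R (↑B ⧸ N)) (ModuleCat.ofHom iC) (ModuleCat.ofHom pbar) hiCinj hpbarsurj hkerC
  obtain ⟨ρC, hρC⟩ := retrOfSplit pbar iC hiCinj hkerC
    (show ↑A'' →ₗ[R] (↑B ⧸ N) from σ.hom) (congrArg ModuleCat.Hom.hom hσ)
  have hρiM : (ρC.comp π).comp (show ↑M →ₗ[R] ↑B from iM.hom) = LinearMap.id := by
    apply LinearMap.ext; intro m
    exact LinearMap.congr_fun hρC m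
  obtain ⟨s, hs⟩ := splitOfRetr (show ↑B →ₗ[R] ↑X from p.hom) hsurj
    (show ↑M →ₗ[R] ↑B from iM.hom) hker (ρC.comp π) hρiM
  exact ⟨ModuleCat.ofHom s, ModuleCat.hom_ext hs⟩
end Ext2

section Push
variable {A' X A'' M T P₁ P₀ : ModuleCat.{0} R}

/-- Given a SES `A' → X → A''` and `Ext¹(A'', M) = 0`, every map `A' → M` extends to `X`. -/
theorem pushoutExt (j : A' ⟶ X) (q : X ⟶ A'') (hjinj : Function.Injective j)
    (hqsurj : Function.Surjective q) (hjq : LinearMap.range j.hom = LinearMap.ker q.hom)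
    (h : Ext1Zero (R := R) A'' M) (f : ↑A' →ₗ[R] ↑M) :
    ∃ g : ↑X →ₗ[R] ↑M, g.comp (show ↑A' →ₗ[R] ↑X from j.hom) = f := by
  set L : ↑A' →ₗ[R] (↑M × ↑X) := f.prod (-(show ↑A' →ₗ[R] ↑X from j.hom)) with hL
  set N : Submodule R (↑M × ↑X) := LinearMap.range L with hN
  set π : (↑M × ↑X) →ₗ[R] ((↑M × ↑X) ⧸ N) := N.mkQ with hπ
  set jM : ↑M →ₗ[R] ((↑M × ↑X) ⧸ N) := π.comp (LinearMap.inl R ↑M ↑X) with hjM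
  have hle : N ≤ LinearMap.ker ((show ↑X →ₗ[R] ↑A'' from q.hom).comp (LinearMap.snd R ↑M ↑X)) := by
    rintro _ ⟨a, rfl⟩
    have : q (j a) = 0 := by rw [← LinearMap.mem_ker, ← hjq]; exact ⟨a, rfl⟩
    simp [hL, LinearMap.mem_ker, this]
  set πT : ((↑M × ↑X) ⧸ N) →ₗ[R] ↑A'' := N.liftQ _ hle with hπT
  have hπTπ : ∀ z : ↑M × ↑X, πT (π z) = q z.2 := fun z => rfl
  have hjMinj : Function.Injective jM := by
    intro m₁ m₂ hm
    have : ((m₁ : ↑M), (0 : ↑X)) - (m₂, 0) ∈ N := by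
      rw [← Submodule.Quotient.eq (p := N)]; exact hm
    obtain ⟨a, ha⟩ := this
    have h2 : -(j a) = 0 := by
      have := congrArg Prod.snd ha
      simpa [hL] using this
    have h3 : a = 0 := hjinj (by rw [neg_eq_zero] at h2; rw [h2, map_zero])
    have h4 : f a = m₁ - m₂ := by
      have := congrArg Prod.fst ha
      simpa [hL] using this
    rw [h3, map_zero] at h4
    exact sub_eq_zero.mp h4.symm
  have hπTsurj : Function.Surjective πT := by
    intro a''
    obtain ⟨x, hx⟩ := hqsurj a''
    exact ⟨π (0, x), by rw [hπTπ, hx]⟩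
  have hkerT : LinearMap.range jM = LinearMap.ker πT := by
    apply le_antisymm
    · rintro _ ⟨m, rfl⟩
      show πT (jM m) = 0
      rw [hjM]
      show πT (π (m, 0)) = 0
      rw [hπTπ, map_zero]
    · intro c hc
      obtain ⟨z, rfl⟩ := N.mkQ_surjective c
      obtain ⟨m, x⟩ := z
      have hqx : q x = 0 := by
        have := hc; rw [LinearMap.mem_ker] at this
        rw [← hπTπ (m, x)]; exact this
      have : x ∈ LinearMap.range (show ↑A' →ₗ[R] ↑X from j.hom) := by rw [hjq]; exact hqx
      obtain ⟨a, ha⟩ := this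
      refine ⟨m + f a, ?_⟩
      show π (m + f a, 0) = π (m, x)
      rw [hπ, Submodule.mkQ_apply, Submodule.mkQ_apply, Submodule.Quotient.eq]
      exact ⟨a, by ext <;> simp [hL, ← ha]⟩
  obtain ⟨σ, hσ⟩ := h (ModuleCat.of R ((↑M × ↑X) ⧸ N)) (ModuleCat.ofHom jM) (ModuleCat.ofHom πT) hjMinj hπTsurj hkerT
  obtain ⟨ρ, hρ⟩ := retrOfSplit πT jM hjMinj hkerT
    (show ↑A'' →ₗ[R] ((↑M × ↑X) ⧸ N) from σ.hom) (congrArg ModuleCat.Hom.hom hσ)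
  refine ⟨(ρ.comp π).comp (LinearMap.inr R ↑M ↑X), ?_⟩
  apply LinearMap.ext; intro a
  have h1 : π (0, j a) = π (f a, 0) := by
    rw [hπ, Submodule.mkQ_apply, Submodule.mkQ_apply, Submodule.Quotient.eq]
    exact ⟨-a, by ext <;> simp [hL]⟩
  show ρ (π (0, j a)) = f a
  rw [h1]
  exact LinearMap.congr_fun hρ (f a)

/-- Lemma A, reverse: the lifting property along a fixed projective presentation implies
`Ext¹(T, M) = 0`. -/
theorem lemmaA_mpr (i : P₁ ⟶ P₀) (p : P₀ ⟶ T) (hP₀ : Projective P₀)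
    (hp : Function.Surjective p) (hip : LinearMap.range i.hom = LinearMap.ker p.hom)
    (hext : ∀ φ : ↑P₁ →ₗ[R] ↑M, ∃ ψ : ↑P₀ →ₗ[R] ↑M, ψ.comp (show ↑P₁ →ₗ[R] ↑P₀ from i.hom) = φ) :
    Ext1Zero (R := R) T M := by
  intro B iM p' hinj hsurj hker
  haveI : Projective P₀ := hP₀
  haveI : Epi p' := (ModuleCat.epi_iff_surjective p').mpr hsurj
  set q₀ : P₀ ⟶ B := Projective.factorThru p p' with hq₀
  have hq₀p : ∀ x : ↑P₀, p' (q₀ x) = p x := by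
    intro x
    exact LinearMap.congr_fun
      (show (show ↑B →ₗ[R] ↑T from p'.hom) ∘ₗ (show ↑P₀ →ₗ[R] ↑B from q₀.hom) = p.hom
        from congrArg ModuleCat.Hom.hom (Projective.factorThru_comp p p')) x
  have hmem : ∀ x : ↑P₁, q₀ (i x) ∈ LinearMap.range (show ↑M →ₗ[R] ↑B from iM.hom) := by
    intro x
    rw [hker, LinearMap.mem_ker]
    rw [hq₀p]
    have : p (i x) = 0 := by
      rw [← LinearMap.mem_ker, ← hip]; exact ⟨x, rfl⟩
    exact this
  set e := LinearEquiv.ofInjective (show ↑M →ₗ[R] ↑B from iM.hom) hinj with he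
  set φ : ↑P₁ →ₗ[R] ↑M :=
    (e.symm : LinearMap.range (show ↑M →ₗ[R] ↑B from iM.hom) →ₗ[R] ↑M).comp
      (((show ↑P₀ →ₗ[R] ↑B from q₀.hom).comp (show ↑P₁ →ₗ[R] ↑P₀ from i.hom)).codRestrict _ hmem)
    with hφ
  have hiMφ : ∀ x : ↑P₁, iM (φ x) = q₀ (i x) := by
    intro x
    have := e.apply_symm_apply ⟨q₀ (i x), hmem x⟩
    exact congrArg Subtype.val this
  obtain ⟨ψ, hψ⟩ := hext φ
  set σ : ↑P₀ →ₗ[R] ↑B := (show ↑P₀ →ₗ[R] ↑B from q₀.hom) - (show ↑M →ₗ[R] ↑B from iM.hom).comp ψ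
    with hσ
  have hkill : LinearMap.ker (show ↑P₀ →ₗ[R] ↑T from p.hom) ≤ LinearMap.ker σ := by
    intro x hx
    rw [← hip] at hx
    obtain ⟨y, rfl⟩ := hx
    have h1 : ψ (i y) = φ y := LinearMap.congr_fun hψ y
    rw [LinearMap.mem_ker, hσ, LinearMap.sub_apply, LinearMap.comp_apply, h1, hiMφ, sub_self]
  obtain ⟨s, hs⟩ := ffact (show ↑P₀ →ₗ[R] ↑T from p.hom) hp σ hkill
  refine ⟨ModuleCat.ofHom s, ?_⟩
  apply ModuleCat.hom_ext
  show (show ↑B →ₗ[R] ↑T from p'.hom) ∘ₗ s = LinearMap.id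
  apply LinearMap.ext; intro t
  obtain ⟨x, rfl⟩ := hp t
  have h1 : s (p x) = σ x := LinearMap.congr_fun hs x
  have h2 : p' (iM (ψ x)) = 0 := by
    have : iM (ψ x) ∈ LinearMap.ker (show ↑B →ₗ[R] ↑T from p'.hom) := by
      rw [← hker]; exact ⟨ψ x, rfl⟩
    exact this
  simp only [LinearMap.comp_apply, LinearMap.id_apply, h1, hσ, LinearMap.sub_apply,
    map_sub]
  rw [hq₀p, h2, sub_zero]
end Push

section Gen
variable {T M A T₀ T₁ P₁ P₀ : ModuleCat.{0} R}

/-- The trace map `T^{(Hom(T,M))} → M`. -/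
noncomputable def traceMap (T M : ModuleCat R) : ((↑T →ₗ[R] ↑M) →₀ ↑T) →ₗ[R] ↑M :=
  Finsupp.lsum ℕ (fun h : ↑T →ₗ[R] ↑M => h)

theorem traceMap_surj (hgen : GenM R T M) : Function.Surjective (traceMap T M) := by
  obtain ⟨ι, f, hf⟩ := hgen
  intro m
  obtain ⟨x, rfl⟩ := hf m
  show f x ∈ LinearMap.range (traceMap T M)
  induction x using Finsupp.induction with
  | zero => rw [map_zero]; exact Submodule.zero_mem _
  | single_add a t x _ _ ih =>
      rw [map_add]
      refine Submodule.add_mem _ ?_ ih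
      refine ⟨Finsupp.single ((show (ι →₀ ↑T) →ₗ[R] ↑M from f.hom).comp (Finsupp.lsingle a)) t, ?_⟩
      rw [traceMap, Finsupp.lsum_single]
      rfl

/-- The kernel of the trace map is in `T^⊥`, provided `T^{(Hom(T,M))} ∈ T^⊥`. -/
theorem kerTraceExt (i : P₁ ⟶ P₀) (p : P₀ ⟶ T) (hP₀ : Projective P₀)
    (hiinj : Function.Injective i) (hp : Function.Surjective p)
    (hip : LinearMap.range i.hom = LinearMap.ker p.hom)
    (hT : Ext1Zero (R := R) T (ModuleCat.of R ((↑T →ₗ[R] ↑M) →₀ ↑T))) :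
    Ext1Zero (R := R) T (ModuleCat.of R (LinearMap.ker (traceMap T M))) := by
  set g := traceMap T M with hg
  apply lemmaA_mpr i p hP₀ hp hip
  intro φ
  set φ' : ↑P₁ →ₗ[R] ((↑T →ₗ[R] ↑M) →₀ ↑T) := (LinearMap.ker g).subtype.comp φ with hφ'
  obtain ⟨ψ₀, hψ₀⟩ := pushoutExt i p hiinj hp hip hT φ'
  have hkill : LinearMap.ker (show ↑P₀ →ₗ[R] ↑T from p.hom) ≤ LinearMap.ker (g.comp ψ₀) := by
    intro x hx
    rw [← hip] at hx
    obtain ⟨y, rfl⟩ := hx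
    have h1 : ψ₀ (i y) = φ' y := LinearMap.congr_fun hψ₀ y
    rw [LinearMap.mem_ker, LinearMap.comp_apply]
    exact (congrArg g h1).trans (φ y).2
  obtain ⟨h, hh⟩ := ffact (show ↑P₀ →ₗ[R] ↑T from p.hom) hp (g.comp ψ₀) hkill
  set ψ₀' : ↑P₀ →ₗ[R] ((↑T →ₗ[R] ↑M) →₀ ↑T) := show _ →ₗ[R] _ from ψ₀ with hψ₀'
  set ψ₁ : ↑P₀ →ₗ[R] ((↑T →ₗ[R] ↑M) →₀ ↑T) :=
    ψ₀' - (Finsupp.lsingle h).comp (show ↑P₀ →ₗ[R] ↑T from p.hom) with hψ₁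
  have hψ₁x : ∀ x : ↑P₀, ψ₁ x = ψ₀' x - Finsupp.single h (p x) := fun x => rfl
  have hmem : ∀ x : ↑P₀, ψ₁ x ∈ LinearMap.ker g := by
    intro x
    rw [LinearMap.mem_ker, hψ₁x, map_sub]
    have h2 : g (Finsupp.single h (p x)) = h (p x) := by
      rw [hg, traceMap]
      exact Finsupp.lsum_single ..
    have h3 : h (p x) = g (ψ₀' x) := LinearMap.congr_fun hh x
    rw [h2, h3, sub_self]
  refine ⟨ψ₁.codRestrict _ hmem, ?_⟩
  apply LinearMap.ext; intro x
  apply Subtype.ext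
  have h1 : ψ₀ (i x) = φ' x := LinearMap.congr_fun hψ₀ x
  have h2 : p (i x) = 0 := by
    rw [← LinearMap.mem_ker, ← hip]; exact ⟨x, rfl⟩
  show ψ₁ (i x) = ((show ↥(LinearMap.ker g) from φ x) : ((↑T →ₗ[R] ↑M) →₀ ↑T))
  rw [hψ₁x, show ψ₀' ((show ↑P₁ →ₗ[R] ↑P₀ from i.hom) x) = φ' x from h1,
    show p (i x) = 0 from h2, Finsupp.single_zero, sub_zero]
  rfl

theorem genOfSurj (hgen : GenM R T A) (f : ↑A →ₗ[R] ↑M) (hf : Function.Surjective f) :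
    GenM R T M := by
  obtain ⟨ι, f₀, hf₀⟩ := hgen
  exact ⟨ι, ModuleCat.ofHom (f.comp (show _ →ₗ[R] ↑A from f₀.hom)), hf.comp hf₀⟩

theorem genFinsuppOfAdd (hA : InAddM R T A) (σ : Type) :
    GenM R T (ModuleCat.of R (σ →₀ ↑A)) := by
  obtain ⟨κ, iA, rA, hir⟩ := hA
  have hrA : Function.Surjective rA := by
    intro a
    exact ⟨iA a, LinearMap.congr_fun
      (show (show _ →ₗ[R] ↑A from rA.hom) ∘ₗ (show ↑A →ₗ[R] _ from iA.hom) = LinearMap.id from congrArg ModuleCat.Hom.hom hir) a⟩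
  refine ⟨σ × κ, ModuleCat.ofHom ((Finsupp.mapRange.linearMap (show (κ →₀ ↑T) →ₗ[R] ↑A from rA.hom)).comp
    (Finsupp.curryLinearEquiv R).toLinearMap), ?_⟩
  apply Function.Surjective.comp (g := ⇑(Finsupp.mapRange.linearMap
    (show (κ →₀ ↑T) →ₗ[R] ↑A from rA.hom)))
  · intro y
    refine ⟨Finsupp.mapRange.linearMap (show ↑A →ₗ[R] (κ →₀ ↑T) from iA.hom) y, ?_⟩
    ext a
    simp only [Finsupp.mapRange.linearMap_apply, Finsupp.mapRange_apply]
    exact LinearMap.congr_fun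
      (show (show _ →ₗ[R] ↑A from rA.hom) ∘ₗ (show ↑A →ₗ[R] _ from iA.hom) = LinearMap.id from congrArg ModuleCat.Hom.hom hir) (y a)
  · exact (Finsupp.curryLinearEquiv R).surjective

theorem genOfExt (j : ModuleCat.of R R ⟶ T₀) (q : T₀ ⟶ T₁)
    (hjinj : Function.Injective j) (hqsurj : Function.Surjective q)
    (hjq : LinearMap.range j.hom = LinearMap.ker q.hom)
    (hAdd₀ : InAddM R T T₀) (hAdd₁ : InAddM R T T₁)
    (hM : Ext1Zero (R := R) T M) : GenM R T M := by
  obtain ⟨κ₁, i₁, r₁, h₁⟩ := hAdd₁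
  have hExtT₁ : Ext1Zero (R := R) T₁ M := extRetract (extFinsupp hM κ₁) i₁ r₁ h₁
  have key : ∀ m : ↑M, ∃ g : ↑T₀ →ₗ[R] ↑M, g (j (1 : R)) = m := by
    intro m
    obtain ⟨g, hgj⟩ := pushoutExt j q hjinj hqsurj hjq hExtT₁
      (LinearMap.toSpanSingleton R ↑M m)
    refine ⟨g, ?_⟩
    have h2 := LinearMap.congr_fun hgj (1 : R)
    have h3 : LinearMap.toSpanSingleton R ↑M m 1 = m := LinearMap.toSpanSingleton_apply_one ..
    exact h2.trans h3
  choose gm hgm using key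
  have hsurj : Function.Surjective (Finsupp.lsum ℕ gm : (↑M →₀ ↑T₀) →ₗ[R] ↑M) := by
    intro m
    refine ⟨Finsupp.single m (j (1 : R)), ?_⟩
    rw [Finsupp.lsum_single]
    exact hgm m
  exact genOfSurj (genFinsuppOfAdd hAdd₀ ↑M) _ hsurj

end Gen

section Build
variable {T P₁ P₀ : ModuleCat.{0} R}

theorem presSelf (T : ModuleCat.{0} R) (ι : Type) : PresM R T (ModuleCat.of R (ι →₀ ↑T)) := by
  refine ⟨ι, 𝟙 _, fun y => ⟨y, rfl⟩, Empty, 0, ?_⟩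
  rintro ⟨y, hy⟩
  refine ⟨0, ?_⟩
  apply Subtype.ext
  show (0 : ι →₀ ↑T) = y
  exact (show y = 0 from hy).symm

theorem buildT3 (i : P₁ ⟶ P₀) (p : P₀ ⟶ T)
    (hP₀ : Projective P₀) (hiinj : Function.Injective i) (hp : Function.Surjective p)
    (hip : LinearMap.range i.hom = LinearMap.ker p.hom)
    (hiff : ∀ M : ModuleCat.{0} R, Ext1Zero (R := R) T M ↔ PresM R T M) :
    ∃ (T₀ T₁ : ModuleCat.{0} R) (j : ModuleCat.of R R ⟶ T₀) (q : T₀ ⟶ T₁),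
      Function.Injective j ∧ Function.Surjective q ∧
      LinearMap.range j.hom = LinearMap.ker q.hom ∧ InAddM R T T₀ ∧ InAddM R T T₁ := by
  classical
  have hB1 : ∀ ι : Type, Ext1Zero (R := R) T (ModuleCat.of R (ι →₀ ↑T)) :=
    fun ι => (hiff _).mpr (presSelf T ι)
  set Λ : Type := (↑P₁ →ₗ[R] R) with hΛ
  set Φ : (Λ →₀ ↑P₁) →ₗ[R] R := Finsupp.lsum ℕ (fun h : Λ => h) with hΦ
  set I : (Λ →₀ ↑P₁) →ₗ[R] (Λ →₀ ↑P₀) :=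
    Finsupp.mapRange.linearMap (show ↑P₁ →ₗ[R] ↑P₀ from i.hom) with hI
  set L : (Λ →₀ ↑P₁) →ₗ[R] (R × (Λ →₀ ↑P₀)) := Φ.prod (-I) with hL
  set N : Submodule R (R × (Λ →₀ ↑P₀)) := LinearMap.range L with hN
  set π : (R × (Λ →₀ ↑P₀)) →ₗ[R] ((R × (Λ →₀ ↑P₀)) ⧸ N) := N.mkQ with hπ
  set jlin : R →ₗ[R] ((R × (Λ →₀ ↑P₀)) ⧸ N) := π.comp (LinearMap.inl R R (Λ →₀ ↑P₀)) with hjlin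
  have hpi0 : ∀ x : ↑P₁, p (i x) = 0 := fun x => by
    rw [← LinearMap.mem_ker, ← hip]; exact ⟨x, rfl⟩
  set MR : (Λ →₀ ↑P₀) →ₗ[R] (Λ →₀ ↑T) :=
    Finsupp.mapRange.linearMap (show ↑P₀ →ₗ[R] ↑T from p.hom) with hMR
  have hMRI : ∀ y : (Λ →₀ ↑P₁), MR (I y) = 0 := by
    intro y
    ext a
    rw [hMR, Finsupp.mapRange.linearMap_apply, Finsupp.mapRange_apply, hI,
      Finsupp.mapRange.linearMap_apply, Finsupp.mapRange_apply]
    rw [show (show ↑P₀ →ₗ[R] ↑T from p.hom) ((show ↑P₁ →ₗ[R] ↑P₀ from i.hom) (y a)) = 0 from hpi0 (y a)]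
    simp
  set Q0 : (R × (Λ →₀ ↑P₀)) →ₗ[R] (Λ →₀ ↑T) := MR.comp (LinearMap.snd R R (Λ →₀ ↑P₀)) with hQ0
  have hle : N ≤ LinearMap.ker Q0 := by
    rintro _ ⟨x, rfl⟩
    rw [LinearMap.mem_ker, hQ0]
    show MR ((L x).2) = 0
    have h2 : (L x).2 = -(I x) := rfl
    rw [h2, map_neg, hMRI, neg_zero]
  set qlin : ((R × (Λ →₀ ↑P₀)) ⧸ N) →ₗ[R] (Λ →₀ ↑T) := N.liftQ Q0 hle with hqlin
  have hqπ : ∀ z : R × (Λ →₀ ↑P₀), qlin (π z) = MR z.2 := fun z => rfl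
  -- injectivity of jlin
  have hjinj : Function.Injective jlin := by
    intro r₁ r₂ hr
    have hmem : ((r₁ : R), (0 : Λ →₀ ↑P₀)) - (r₂, 0) ∈ N := by
      rw [← Submodule.Quotient.eq (p := N)]; exact hr
    obtain ⟨x, hx⟩ := hmem
    have h2 : -(I x) = 0 := by
      have := congrArg Prod.snd hx
      simpa [hL] using this
    have h3 : x = 0 := by
      rw [neg_eq_zero] at h2
      have : ∀ a, i (x a) = 0 := by
        intro a
        have := congrArg (fun w : (Λ →₀ ↑P₀) => w a) h2
        simpa [hI, Finsupp.mapRange_apply] using this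
      ext a
      exact hiinj (by rw [this a]; simp)
    have h4 : Φ x = r₁ - r₂ := by
      have := congrArg Prod.fst hx
      simpa [hL] using this
    rw [h3, map_zero] at h4
    exact sub_eq_zero.mp h4.symm
  -- surjectivity of qlin
  have hqsurj : Function.Surjective qlin := by
    have hmr : ∀ y : (Λ →₀ ↑T), ∃ z : (Λ →₀ ↑P₀), MR z = y := by
      intro y
      induction y using Finsupp.induction with
      | zero => exact ⟨0, map_zero _⟩
      | single_add a t x _ _ ih =>
          obtain ⟨z, hz⟩ := ih
          obtain ⟨u, hu⟩ := hp t
          refine ⟨Finsupp.single a u + z, ?_⟩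
          rw [map_add, hz]
          congr 1
          rw [hMR, Finsupp.mapRange.linearMap_apply, Finsupp.mapRange_single]
          rw [show (show ↑P₀ →ₗ[R] ↑T from p.hom) u = t from hu]
    intro y
    obtain ⟨z, hz⟩ := hmr y
    exact ⟨π (0, z), by rw [hqπ, hz]⟩
  -- exactness
  have hjq : LinearMap.range jlin = LinearMap.ker qlin := by
    apply le_antisymm
    · rintro _ ⟨r, rfl⟩
      rw [LinearMap.mem_ker, hjlin]
      show qlin (π (r, 0)) = 0
      rw [hqπ, show ((r : R), (0 : Λ →₀ ↑P₀)).2 = 0 from rfl, map_zero]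
    · intro c hc
      obtain ⟨z, rfl⟩ := N.mkQ_surjective c
      obtain ⟨r, w⟩ := z
      rw [LinearMap.mem_ker] at hc
      have hw : MR w = 0 := by rw [← hqπ (r, w)]; exact hc
      have hwa : ∀ a, w a ∈ LinearMap.range (show ↑P₁ →ₗ[R] ↑P₀ from i.hom) := by
        intro a
        have := congrArg (fun v : (Λ →₀ ↑T) => v a) hw
        simp only [hMR, Finsupp.mapRange.linearMap_apply, Finsupp.mapRange_apply] at this
        rw [hip]
        exact this
      set x : Λ →₀ ↑P₁ := w.mapRange (Function.invFun (show ↑P₁ →ₗ[R] ↑P₀ from i.hom))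
        (by
          apply hiinj
          rw [Function.invFun_eq ⟨0, map_zero _⟩, map_zero]) with hx
      have hIx : I x = w := by
        ext a
        rw [hI, Finsupp.mapRange.linearMap_apply, Finsupp.mapRange_apply, hx,
          Finsupp.mapRange_apply]
        exact Function.invFun_eq (hwa a)
      refine ⟨r + Φ x, ?_⟩
      show π (r + Φ x, 0) = π (r, w)
      rw [hπ, Submodule.mkQ_apply, Submodule.mkQ_apply, Submodule.Quotient.eq]
      refine ⟨x, ?_⟩
      have h5 : L x = (Φ x, -(I x)) := rfl
      rw [h5, hIx, Prod.mk_sub_mk, add_sub_cancel_left, zero_sub]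
  -- the two modules and maps, as objects/morphisms
  set T₀c : ModuleCat.{0} R := ModuleCat.of R ((R × (Λ →₀ ↑P₀)) ⧸ N) with hT₀c
  set T₁c : ModuleCat.{0} R := ModuleCat.of R (Λ →₀ ↑T) with hT₁c
  -- key extension property: maps P₁ → R, composed into T₀c, extend to P₀
  have keyExtend : ∀ h : ↑P₁ →ₗ[R] R, ∃ ψ : ↑P₀ →ₗ[R] ((R × (Λ →₀ ↑P₀)) ⧸ N),
      ψ.comp (show ↑P₁ →ₗ[R] ↑P₀ from i.hom) = jlin.comp h := by
    intro h
    refine ⟨(π.comp (LinearMap.inr R R (Λ →₀ ↑P₀))).comp (Finsupp.lsingle h), ?_⟩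
    apply LinearMap.ext; intro x
    show π (0, Finsupp.single h (i x)) = jlin (h x)
    rw [hjlin]
    show π (0, Finsupp.single h (i x)) = π (h x, 0)
    rw [hπ, Submodule.mkQ_apply, Submodule.mkQ_apply, Submodule.Quotient.eq]
    refine ⟨-(Finsupp.single h x), ?_⟩
    have h5 : L (-(Finsupp.single h x)) = (-(Φ (Finsupp.single h x)), I (Finsupp.single h x)) := by
      rw [hL]
      show (Φ (-(Finsupp.single h x)), -(I (-(Finsupp.single h x)))) = _
      rw [map_neg, map_neg, neg_neg]
    rw [h5]
    have h6 : Φ (Finsupp.single h x) = h x := by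
      rw [hΦ]; exact Finsupp.lsum_single ..
    have h7 : I (Finsupp.single h x) = Finsupp.single h (i x) := by
      rw [hI, Finsupp.mapRange.linearMap_apply, Finsupp.mapRange_single]
    rw [h6, h7, Prod.mk_sub_mk, zero_sub, sub_zero]
  -- T₀c ∈ T^⊥
  have hT₀ext : Ext1Zero (R := R) T T₀c := by
    apply lemmaA_mpr i p hP₀ hp hip
    intro φ
    set φ' : ↑P₁ →ₗ[R] ((R × (Λ →₀ ↑P₀)) ⧸ N) := show _ →ₗ[R] _ from φ with hφ'
    obtain ⟨ψ₁, hψ₁⟩ := pushoutExt i p hiinj hp hip (hB1 Λ) (qlin.comp φ')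
    haveI : Epi (show T₀c ⟶ T₁c from ModuleCat.ofHom qlin) :=
      (ModuleCat.epi_iff_surjective (show T₀c ⟶ T₁c from ModuleCat.ofHom qlin)).mpr hqsurj
    haveI : Projective P₀ := hP₀
    set ψt : P₀ ⟶ T₀c := Projective.factorThru (show P₀ ⟶ T₁c from ModuleCat.ofHom ψ₁)
      (show T₀c ⟶ T₁c from ModuleCat.ofHom qlin) with hψt
    set ψt' : ↑P₀ →ₗ[R] ((R × (Λ →₀ ↑P₀)) ⧸ N) := show _ →ₗ[R] _ from ψt.hom with hψt'
    have hψtq : ∀ x : ↑P₀, qlin (ψt' x) = ψ₁ x := by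
      intro x
      have hcat := Projective.factorThru_comp (show P₀ ⟶ T₁c from ModuleCat.ofHom ψ₁)
        (show T₀c ⟶ T₁c from ModuleCat.ofHom qlin)
      exact LinearMap.congr_fun
        (show qlin ∘ₗ ψt' = (show ↑P₀ →ₗ[R] (Λ →₀ ↑T) from ψ₁) from congrArg ModuleCat.Hom.hom hcat) x
    set δ : ↑P₁ →ₗ[R] ((R × (Λ →₀ ↑P₀)) ⧸ N) :=
      φ' - ψt'.comp (show ↑P₁ →ₗ[R] ↑P₀ from i.hom) with hδ
    have hδx : ∀ x : ↑P₁, δ x = φ' x - ψt' (i x) := fun x => rfl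
    have hδmem : ∀ x : ↑P₁, δ x ∈ LinearMap.range jlin := by
      intro x
      rw [hjq, LinearMap.mem_ker, hδx, map_sub, hψtq]
      have h8 : ψ₁ (i x) = qlin (φ' x) := LinearMap.congr_fun hψ₁ x
      rw [h8, sub_self]
    set e := LinearEquiv.ofInjective jlin hjinj with he
    set h : ↑P₁ →ₗ[R] R := (e.symm : LinearMap.range jlin →ₗ[R] R).comp
      (δ.codRestrict _ hδmem) with hh
    have hjh : ∀ x : ↑P₁, jlin (h x) = δ x := by
      intro x
      have := e.apply_symm_apply ⟨δ x, hδmem x⟩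
      exact congrArg Subtype.val this
    obtain ⟨ψ₂, hψ₂⟩ := keyExtend h
    refine ⟨ψt' + ψ₂, ?_⟩
    apply LinearMap.ext; intro x
    have h9 : ψ₂ (i x) = jlin (h x) := LinearMap.congr_fun hψ₂ x
    show ψt' (i x) + ψ₂ (i x) = φ' x
    rw [h9, hjh, hδx]
    abel
  -- T₀c is presented, hence generated
  obtain ⟨ι₀, f₀, hf₀surj, -⟩ := (hiff T₀c).mp hT₀ext
  have hgen₀ : GenM R T T₀c := ⟨ι₀, f₀, hf₀surj⟩
  -- trace map splitting: T₀c ∈ Add T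
  set g : ((↑T →ₗ[R] ↑T₀c) →₀ ↑T) →ₗ[R] ↑T₀c := traceMap T T₀c with hgt
  have hgsurj : Function.Surjective g := traceMap_surj hgen₀
  have hKext : Ext1Zero (R := R) T (ModuleCat.of R (LinearMap.ker g)) :=
    kerTraceExt i p hP₀ hiinj hp hip (hB1 _)
  have hsplit : Ext1Zero (R := R) T₀c (ModuleCat.of R (LinearMap.ker g)) := by
    refine extTwo (M := ModuleCat.of R (LinearMap.ker g))
      (show ModuleCat.of R R ⟶ T₀c from ModuleCat.ofHom jlin) (show T₀c ⟶ T₁c from ModuleCat.ofHom qlin)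
      hjinj hqsurj hjq (extProjR _) ?_
    exact extFinsupp hKext Λ
  obtain ⟨s, hs⟩ := hsplit (ModuleCat.of R ((↑T →ₗ[R] ↑T₀c) →₀ ↑T))
    (show ModuleCat.of R (LinearMap.ker g) ⟶ _ from ModuleCat.ofHom (LinearMap.ker g).subtype)
    (show _ ⟶ T₀c from ModuleCat.ofHom g) (Submodule.injective_subtype _) hgsurj
    (Submodule.range_subtype _)
  have hAdd₀ : InAddM R T T₀c := ⟨(↑T →ₗ[R] ↑T₀c), s, (show _ ⟶ T₀c from ModuleCat.ofHom g), hs⟩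
  have hAdd₁ : InAddM R T T₁c := ⟨Λ, 𝟙 T₁c, 𝟙 T₁c, Category.id_comp _⟩
  exact ⟨T₀c, T₁c, (show ModuleCat.of R R ⟶ T₀c from ModuleCat.ofHom jlin), (show T₀c ⟶ T₁c from ModuleCat.ofHom qlin),
    hjinj, hqsurj, hjq, hAdd₀, hAdd₁⟩
end Build

end Aux

/-- Bazzoni: dimension at most `1` is
1-tilting iff `T^⊥ = Pres(T) = Gen₁(T)`. -/
theorem stmt14 (T : ModuleCat R) (hpd : PdLeOneM R T) :
    IsTiltingM R T ↔ (∀ M : ModuleCat R, Ext1Zero R T M ↔ PresM R T M) := by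
  obtain ⟨P₁, P₀, i, p, hP₁, hP₀, hiinj, hpsurj, hip⟩ := hpd
  constructor
  · rintro ⟨-, hExt, T₀, T₁, j, q, hjinj, hqsurj, hjq, hAdd₀, hAdd₁⟩
    intro M
    constructor
    · intro hM
      have hgen : GenM R T M := genOfExt j q hjinj hqsurj hjq hAdd₀ hAdd₁ hM
      have hK : Ext1Zero (R := R) T (ModuleCat.of R (LinearMap.ker (traceMap T M))) :=
        kerTraceExt i p hP₀ hiinj hpsurj hip (hExt _)
      exact ⟨(↑T →ₗ[R] ↑M),
        (show ModuleCat.of R ((↑T →ₗ[R] ↑M) →₀ ↑T) ⟶ M from ModuleCat.ofHom (traceMap T M)),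
        traceMap_surj hgen, genOfExt j q hjinj hqsurj hjq hAdd₀ hAdd₁ hK⟩
    · rintro ⟨ι, f, hfsurj, -⟩
      apply lemmaA_mpr i p hP₀ hpsurj hip
      intro φ
      haveI : Projective P₁ := hP₁
      haveI : Epi f := (ModuleCat.epi_iff_surjective f).mpr hfsurj
      set φt : P₁ ⟶ ModuleCat.of R (ι →₀ ↑T) :=
        Projective.factorThru (show P₁ ⟶ M from ModuleCat.ofHom φ) f with hφtdef
      have hφt : ∀ x : ↑P₁, f (φt x) = φ x := by
        intro x
        have hcat := Projective.factorThru_comp (show P₁ ⟶ M from ModuleCat.ofHom φ) f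
        exact LinearMap.congr_fun
          (show (show ↑(ModuleCat.of R (ι →₀ ↑T)) →ₗ[R] ↑M from f.hom) ∘ₗ
            (show ↑P₁ →ₗ[R] _ from φt.hom) = φ from congrArg ModuleCat.Hom.hom hcat) x
      obtain ⟨ψt, hψt⟩ := pushoutExt i p hiinj hpsurj hip (hExt ι)
        (show ↑P₁ →ₗ[R] ↑(ModuleCat.of R (ι →₀ ↑T)) from φt.hom)
      refine ⟨(show ↑(ModuleCat.of R (ι →₀ ↑T)) →ₗ[R] ↑M from f.hom).comp ψt, ?_⟩
      apply LinearMap.ext; intro x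
      show f (ψt (i x)) = φ x
      rw [show ψt ((show ↑P₁ →ₗ[R] ↑P₀ from i.hom) x) = φt x from LinearMap.congr_fun hψt x]
      exact hφt x
  · intro hiff
    exact ⟨⟨P₁, P₀, i, p, hP₁, hP₀, hiinj, hpsurj, hip⟩,
      fun ι => (hiff _).mpr (presSelf T ι),
      buildT3 i p hP₀ hiinj hpsurj hip hiff⟩
end

section
/- Let R be a ring and T a 1-tilting right R-module. For every M in Pres(T) there exists a short exact sequence 0 → K → T₀ → M → 0 with T₀ ∈ Add T and K ∈ Pres(T). -/
open CategoryTheory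

variable (R : Type) [Ring R]

section AuxTilting

/-- Elementary `Ext¹(Q, K) = 0` for plain modules. -/
def E1Z (Q K : Type) [AddCommGroup Q] [Module R Q] [AddCommGroup K] [Module R K] : Prop :=
  ∀ (B : Type) [AddCommGroup B] [Module R B], ∀ (i : K →ₗ[R] B) (p : B →ₗ[R] Q),
    Function.Injective i → Function.Surjective p → LinearMap.range i = LinearMap.ker p →
    ∃ s : Q →ₗ[R] B, ∀ x, p (s x) = x

variable {R}

/-- Lifting along a surjection with kernel `K`, given `Ext¹(X,K) = 0`
(pullback argument). -/
theorem lift_of_E1Z {Q K B X : Type}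
    [AddCommGroup Q] [Module R Q] [AddCommGroup K] [Module R K]
    [AddCommGroup B] [Module R B] [AddCommGroup X] [Module R X]
    (hX : E1Z R X K) (i : K →ₗ[R] B) (q : B →ₗ[R] Q)
    (hi : Function.Injective i) (hq : Function.Surjective q)
    (hker : LinearMap.range i = LinearMap.ker q) (g : X →ₗ[R] Q) :
    ∃ σ : X →ₗ[R] B, ∀ x, q (σ x) = g x := by
  set P : Submodule R (X × B) :=
    LinearMap.ker ((g ∘ₗ LinearMap.fst R X B) - (q ∘ₗ LinearMap.snd R X B)) with hP
  have memP : ∀ v : X × B, v ∈ P ↔ g v.1 = q v.2 := by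
    intro v
    simp [hP, LinearMap.mem_ker, sub_eq_zero]
  have hik : ∀ k : K, q (i k) = 0 := by
    intro k
    have : i k ∈ LinearMap.ker q := hker ▸ LinearMap.mem_range_self i k
    simpa using this
  set i' : K →ₗ[R] P := LinearMap.codRestrict P (LinearMap.prod 0 i)
    (fun k => (memP _).2 (by simp [hik k])) with hi'def
  set fst' : P →ₗ[R] X := (LinearMap.fst R X B) ∘ₗ P.subtype with hf'def
  have hi'inj : Function.Injective i' := by
    intro a b hab
    apply hi
    have := congrArg (fun z : P => (z : X × B).2) hab
    simpa [hi'def] using this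
  have hf'surj : Function.Surjective fst' := by
    intro x
    obtain ⟨b, hb⟩ := hq (g x)
    exact ⟨⟨(x, b), (memP _).2 hb.symm⟩, rfl⟩
  have hrange : LinearMap.range i' = LinearMap.ker fst' := by
    apply le_antisymm
    · rintro _ ⟨k, rfl⟩
      simp [hi'def, hf'def, LinearMap.mem_ker]
    · rintro ⟨⟨x, b⟩, hv⟩ hx
      have hx0 : x = 0 := hx
      have : q b = 0 := by
        have := (memP _).1 hv
        simpa [hx0] using this.symm
      obtain ⟨k, hk⟩ := (hker.symm ▸ this : b ∈ LinearMap.range i)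
      refine ⟨k, ?_⟩
      apply Subtype.ext
      simp [hi'def, hx0, hk]
  obtain ⟨s, hs⟩ := hX P i' fst' hi'inj hf'surj hrange
  refine ⟨(LinearMap.snd R X B ∘ₗ P.subtype) ∘ₗ s, fun x => ?_⟩
  have hmem := ((memP _).1 (s x).2)
  have hfst : ((s x : X × B)).1 = x := hs x
  simpa [hfst] using hmem.symm

/-- `Ext¹(-, K)` vanishing passes to arbitrary coproducts in the first argument. -/
theorem E1Z_finsupp {Q K : Type} [AddCommGroup Q] [Module R Q] [AddCommGroup K] [Module R K]
    (h : E1Z R Q K) (μ : Type) : E1Z R (μ →₀ Q) K := by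
  intro B _ _ i q hi hq hker
  choose σ hσ using fun m : μ => lift_of_E1Z h i q hi hq hker (Finsupp.lsingle m)
  refine ⟨Finsupp.lsum ℕ σ, fun x => ?_⟩
  have hcomp : q ∘ₗ (Finsupp.lsum ℕ σ : (μ →₀ Q) →ₗ[R] B) = LinearMap.id := by
    apply Finsupp.lhom_ext
    intro m t
    simpa using hσ m t
  simpa using LinearMap.congr_fun hcomp x

/-- `Ext¹(-, K)` vanishing passes to retracts in the first argument. -/
theorem E1Z_retract {X T₁ K : Type}
    [AddCommGroup X] [Module R X] [AddCommGroup T₁] [Module R T₁]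
    [AddCommGroup K] [Module R K]
    (h : E1Z R X K) (i₁ : T₁ →ₗ[R] X) (r₁ : X →ₗ[R] T₁) (hret : ∀ x, r₁ (i₁ x) = x) :
    E1Z R T₁ K := by
  intro B _ _ i q hi hq hker
  obtain ⟨σ, hσ⟩ := lift_of_E1Z h i q hi hq hker r₁
  exact ⟨σ ∘ₗ i₁, fun x => by rw [LinearMap.comp_apply, hσ, hret]⟩

/-- If `K = ker ε` for `ε : X → N` with `Hom(Q, ε)` surjective and `Ext¹(Q, X) = 0`,
then `Ext¹(Q, K) = 0` (pushout argument). -/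
theorem E1Z_of_lift {Q X N K : Type}
    [AddCommGroup Q] [Module R Q] [AddCommGroup X] [Module R X]
    [AddCommGroup N] [Module R N] [AddCommGroup K] [Module R K]
    (hX : E1Z R Q X)
    (ε : X →ₗ[R] N) (κ : K →ₗ[R] X)
    (hκ : Function.Injective κ) (hkerε : LinearMap.range κ = LinearMap.ker ε)
    (hlift : ∀ h : Q →ₗ[R] N, ∃ g : Q →ₗ[R] X, ∀ t, ε (g t) = h t) :
    E1Z R Q K := by
  intro B _ _ i q hi hq hker
  have hεκ : ∀ k, ε (κ k) = 0 := fun k => by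
    have : κ k ∈ LinearMap.ker ε := hkerε ▸ LinearMap.mem_range_self κ k
    simpa using this
  have hqi : ∀ k, q (i k) = 0 := fun k => by
    have : i k ∈ LinearMap.ker q := hker ▸ LinearMap.mem_range_self i k
    simpa using this
  set W : Submodule R (X × B) := LinearMap.range (LinearMap.prod κ (-i)) with hW
  have memW : ∀ v : X × B, (∃ k : K, κ k = v.1 ∧ -(i k) = v.2) → v ∈ W := by
    rintro v ⟨k, h1, h2⟩; exact ⟨k, Prod.ext h1 h2⟩
  have memW' : ∀ v : X × B, v ∈ W → ∃ k : K, κ k = v.1 ∧ -(i k) = v.2 := by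
    rintro _ ⟨k, rfl⟩; exact ⟨k, rfl, rfl⟩
  have quot_eq : ∀ v w : X × B,
      (Submodule.Quotient.mk v : (X × B) ⧸ W) = Submodule.Quotient.mk w ↔ v - w ∈ W :=
    fun v w => Submodule.Quotient.eq W
  set jX : X →ₗ[R] (X × B) ⧸ W := W.mkQ ∘ₗ LinearMap.inl R X B with hjX
  set jB : B →ₗ[R] (X × B) ⧸ W := W.mkQ ∘ₗ LinearMap.inr R X B with hjB
  have jXapp : ∀ x, jX x = Submodule.Quotient.mk (x, 0) := fun x => rfl
  have jBapp : ∀ b, jB b = Submodule.Quotient.mk (0, b) := fun b => rfl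
  have hWle_q : W ≤ LinearMap.ker (LinearMap.coprod (0 : X →ₗ[R] Q) q) := by
    rintro _ ⟨k, rfl⟩
    simp [LinearMap.mem_ker, hqi k]
  have hWle_ε : W ≤ LinearMap.ker (LinearMap.coprod ε (0 : B →ₗ[R] N)) := by
    rintro _ ⟨k, rfl⟩
    simp [LinearMap.mem_ker, hεκ k]
  set π : ((X × B) ⧸ W) →ₗ[R] Q := W.liftQ _ hWle_q with hπ
  set ρ : ((X × B) ⧸ W) →ₗ[R] N := W.liftQ _ hWle_ε with hρ
  have πmk : ∀ v : X × B, π (Submodule.Quotient.mk v) = q v.2 := fun v => by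
    rw [hπ, Submodule.liftQ_apply, LinearMap.coprod_apply]
    simp
  have ρmk : ∀ v : X × B, ρ (Submodule.Quotient.mk v) = ε v.1 := fun v => by
    rw [hρ, Submodule.liftQ_apply, LinearMap.coprod_apply]
    simp
  have hjXinj : Function.Injective jX := by
    intro a b hab
    rw [jXapp, jXapp, quot_eq] at hab
    obtain ⟨k, hk1, hk2⟩ := memW' _ hab
    have hk0 : k = 0 := hi (by simpa [neg_eq_zero] using hk2)
    have h1 : κ k = a - b := by simpa using hk1
    have h2 : a - b = 0 := by rw [← h1, hk0, map_zero]
    exact sub_eq_zero.mp h2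
  have hjBinj : Function.Injective jB := by
    intro a b hab
    rw [jBapp, jBapp, quot_eq] at hab
    obtain ⟨k, hk1, hk2⟩ := memW' _ hab
    have hk0 : k = 0 := hκ (by simpa using hk1)
    have h1 : -(i k) = a - b := by simpa using hk2
    have h2 : a - b = 0 := by rw [← h1, hk0, map_zero, neg_zero]
    exact sub_eq_zero.mp h2
  have hrangeX : LinearMap.range jX = LinearMap.ker π := by
    apply le_antisymm
    · rintro _ ⟨x, rfl⟩
      rw [LinearMap.mem_ker, jXapp, πmk]
      simp
    · intro u hu
      obtain ⟨v, rfl⟩ := Submodule.Quotient.mk_surjective W u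
      have hv : q v.2 = 0 := by rw [LinearMap.mem_ker, πmk] at hu; exact hu
      have : v.2 ∈ LinearMap.range i := by rw [hker, LinearMap.mem_ker]; exact hv
      obtain ⟨k, hk⟩ := this
      refine ⟨v.1 + κ k, ?_⟩
      rw [jXapp, quot_eq]
      refine memW _ ⟨k, by simp, by simp [hk]⟩
  have hkerρ : LinearMap.ker ρ = LinearMap.range jB := by
    apply le_antisymm
    · intro u hu
      obtain ⟨v, rfl⟩ := Submodule.Quotient.mk_surjective W u
      have hv : ε v.1 = 0 := by rw [LinearMap.mem_ker, ρmk] at hu; exact hu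
      have : v.1 ∈ LinearMap.range κ := by rw [hkerε, LinearMap.mem_ker]; exact hv
      obtain ⟨k, hk⟩ := this
      refine ⟨v.2 + i k, ?_⟩
      rw [jBapp, quot_eq]
      refine memW _ ⟨-k, by simp [hk], by simp⟩
    · rintro _ ⟨b, rfl⟩
      rw [LinearMap.mem_ker, jBapp, ρmk]
      simp
  have hπsurj : Function.Surjective π := by
    intro u
    obtain ⟨b, hb⟩ := hq u
    exact ⟨jB b, by rw [jBapp, πmk]; exact hb⟩
  obtain ⟨s, hs⟩ := hX ((X × B) ⧸ W) jX π hjXinj hπsurj hrangeX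
  obtain ⟨g, hg⟩ := hlift (ρ ∘ₗ s)
  have hg' : ∀ u, ε (g u) = ρ (s u) := fun u => by simpa using hg u
  set t : Q →ₗ[R] (X × B) ⧸ W := s - jX ∘ₗ g with ht
  have hπt : ∀ u, π (t u) = u := fun u => by
    have : π (t u) = π (s u) - π (jX (g u)) := by rw [ht]; simp
    rw [this, hs u, jXapp, πmk]
    simp
  have hρt : ∀ u, ρ (t u) = 0 := fun u => by
    have : ρ (t u) = ρ (s u) - ρ (jX (g u)) := by rw [ht]; simp
    rw [this, jXapp, ρmk, ← hg' u, sub_self]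
  have htmem : ∀ u, t u ∈ LinearMap.range jB := fun u => by
    rw [← hkerρ, LinearMap.mem_ker]; exact hρt u
  set eqv := LinearEquiv.ofInjective jB hjBinj with heqv
  set σ : Q →ₗ[R] B :=
    eqv.symm.toLinearMap ∘ₗ LinearMap.codRestrict (LinearMap.range jB) t htmem with hσ
  have hjBσ : ∀ u, jB (σ u) = t u := by
    intro u
    have h1 : eqv (σ u) = LinearMap.codRestrict (LinearMap.range jB) t htmem u := by
      rw [hσ]; simp
    have h2 := congrArg Subtype.val h1
    rw [heqv] at h2
    simpa using h2
  refine ⟨σ, fun u => ?_⟩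
  have h3 : π (jB (σ u)) = u := by rw [hjBσ u, hπt u]
  rw [jBapp, πmk] at h3
  exact h3

/-- Pushout along `R → T₀`: extend `1 ↦ k` to `T₀ → K`, given `Ext¹(T₁, K) = 0`. -/
theorem extend_elem {T₀ T₁ K : Type}
    [AddCommGroup T₀] [Module R T₀] [AddCommGroup T₁] [Module R T₁]
    [AddCommGroup K] [Module R K]
    (i : R →ₗ[R] T₀) (p : T₀ →ₗ[R] T₁)
    (hi : Function.Injective i) (hp : Function.Surjective p)
    (hker : LinearMap.range i = LinearMap.ker p)
    (hE : E1Z R T₁ K)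
    (k : K) : ∃ φ : T₀ →ₗ[R] K, φ (i 1) = k := by
  set e : R →ₗ[R] K := LinearMap.toSpanSingleton R K k with he
  have he1 : e 1 = k := by simp [he]
  have hpi : ∀ r : R, p (i r) = 0 := fun r => by
    have : i r ∈ LinearMap.ker p := hker ▸ LinearMap.mem_range_self i r
    simpa using this
  set W : Submodule R (K × T₀) := LinearMap.range (LinearMap.prod e (-i)) with hW
  have memW : ∀ v : K × T₀, (∃ r : R, e r = v.1 ∧ -(i r) = v.2) → v ∈ W := by
    rintro v ⟨r, h1, h2⟩; exact ⟨r, Prod.ext h1 h2⟩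
  have memW' : ∀ v : K × T₀, v ∈ W → ∃ r : R, e r = v.1 ∧ -(i r) = v.2 := by
    rintro _ ⟨r, rfl⟩; exact ⟨r, rfl, rfl⟩
  have quot_eq : ∀ v w : K × T₀,
      (Submodule.Quotient.mk v : (K × T₀) ⧸ W) = Submodule.Quotient.mk w ↔ v - w ∈ W :=
    fun v w => Submodule.Quotient.eq W
  set jK : K →ₗ[R] (K × T₀) ⧸ W := W.mkQ ∘ₗ LinearMap.inl R K T₀ with hjK
  set jT : T₀ →ₗ[R] (K × T₀) ⧸ W := W.mkQ ∘ₗ LinearMap.inr R K T₀ with hjT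
  have jKapp : ∀ x, jK x = Submodule.Quotient.mk (x, 0) := fun x => rfl
  have jTapp : ∀ b, jT b = Submodule.Quotient.mk (0, b) := fun b => rfl
  have hWle : W ≤ LinearMap.ker (LinearMap.coprod (0 : K →ₗ[R] T₁) p) := by
    rintro _ ⟨r, rfl⟩
    simp [LinearMap.mem_ker, hpi r]
  set π : ((K × T₀) ⧸ W) →ₗ[R] T₁ := W.liftQ _ hWle with hπ
  have πmk : ∀ v : K × T₀, π (Submodule.Quotient.mk v) = p v.2 := fun v => by
    rw [hπ, Submodule.liftQ_apply, LinearMap.coprod_apply]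
    simp
  have hjKinj : Function.Injective jK := by
    intro a b hab
    rw [jKapp, jKapp, quot_eq] at hab
    obtain ⟨r, hr1, hr2⟩ := memW' _ hab
    have hr0 : r = 0 := hi (by simpa [neg_eq_zero] using hr2)
    have h1 : e r = a - b := by simpa using hr1
    have h2 : a - b = 0 := by rw [← h1, hr0, map_zero]
    exact sub_eq_zero.mp h2
  have hrangeK : LinearMap.range jK = LinearMap.ker π := by
    apply le_antisymm
    · rintro _ ⟨x, rfl⟩
      rw [LinearMap.mem_ker, jKapp, πmk]
      simp
    · intro u hu
      obtain ⟨v, rfl⟩ := Submodule.Quotient.mk_surjective W u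
      have hv : p v.2 = 0 := by rw [LinearMap.mem_ker, πmk] at hu; exact hu
      have : v.2 ∈ LinearMap.range i := by rw [hker, LinearMap.mem_ker]; exact hv
      obtain ⟨r, hr⟩ := this
      refine ⟨v.1 + e r, ?_⟩
      rw [jKapp, quot_eq]
      exact memW _ ⟨r, by simp, by simp [hr]⟩
  have hπsurj : Function.Surjective π := by
    intro u
    obtain ⟨b, hb⟩ := hp u
    exact ⟨jT b, by rw [jTapp, πmk]; exact hb⟩
  obtain ⟨s, hs⟩ := hE ((K × T₀) ⧸ W) jK π hjKinj hπsurj hrangeK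
  set ψ : T₀ →ₗ[R] (K × T₀) ⧸ W := jT - s ∘ₗ p with hψ
  have hψmem : ∀ u, ψ u ∈ LinearMap.range jK := fun u => by
    rw [hrangeK, LinearMap.mem_ker]
    have : π (ψ u) = π (jT u) - π (s (p u)) := by rw [hψ]; simp
    rw [this, hs, jTapp, πmk, sub_self]
  set eqv := LinearEquiv.ofInjective jK hjKinj with heqv
  set φ : T₀ →ₗ[R] K :=
    eqv.symm.toLinearMap ∘ₗ LinearMap.codRestrict (LinearMap.range jK) ψ hψmem with hφ
  have hjKφ : ∀ u, jK (φ u) = ψ u := by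
    intro u
    have h1 : eqv (φ u) = LinearMap.codRestrict (LinearMap.range jK) ψ hψmem u := by
      rw [hφ]; simp
    have h2 := congrArg Subtype.val h1
    rw [heqv] at h2
    simpa using h2
  refine ⟨φ, hjKinj ?_⟩
  rw [hjKφ]
  have hpi1 : p (i 1) = 0 := hpi 1
  have : ψ (i 1) = jT (i 1) := by
    rw [hψ]; simp [hpi1]
  rw [this, jTapp, jKapp, quot_eq]
  exact memW _ ⟨-1, by simp [he1], by simp⟩

end AuxTilting

/-- Bridge from the categorical `Ext1Zero` to the elementary `E1Z`. -/
theorem ext1Zero_to_E1Z {T M : ModuleCat R} (h : Ext1Zero R T M) : E1Z R T M := by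
  intro B _ _ i p hi hp hker
  obtain ⟨s, hs⟩ := h (ModuleCat.of R B) (ModuleCat.ofHom i) (ModuleCat.ofHom p) hi hp hker
  have hs' : p ∘ₗ s.hom = LinearMap.id := congrArg ModuleCat.Hom.hom hs
  exact ⟨s.hom, fun x => LinearMap.congr_fun hs' x⟩

/-- For a 1-tilting module, every module generated by `T` lies in `Pres(T)`. -/
theorem gen_to_pres (T : ModuleCat R) (hT : IsTiltingM R T) (N : ModuleCat R)
    (hN : GenM R T N) : PresM R T N := by
  classical
  set ε : ((↑T →ₗ[R] ↑N) →₀ ↑T) →ₗ[R] ↑N := Finsupp.lsum ℕ (fun h => h) with hεdef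
  have εsingle : ∀ (h : ↑T →ₗ[R] ↑N) (t : ↑T), ε (Finsupp.single h t) = h t := by
    intro h t
    simp [hεdef]
  obtain ⟨ι, f₀, hf₀⟩ := hN
  have hεsurj : Function.Surjective ε := by
    intro n
    obtain ⟨x, hx⟩ := hf₀ n
    set E : (ι →₀ ↑T) →ₗ[R] ((↑T →ₗ[R] ↑N) →₀ ↑T) :=
      Finsupp.lsum ℕ (fun m =>
        Finsupp.lsingle (f₀.hom ∘ₗ Finsupp.lsingle m)) with hEdef
    have hcomp : ε ∘ₗ E = f₀.hom := by
      apply Finsupp.lhom_ext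
      intro m t
      simp only [hEdef, εsingle, LinearMap.coe_comp, Function.comp_apply,
        Finsupp.coe_lsum, Finsupp.sum_single_index, map_zero, Finsupp.lsingle_apply]
    exact ⟨E x, (LinearMap.congr_fun hcomp x).trans hx⟩
  set K := LinearMap.ker ε with hKdef
  refine ⟨(↑T →ₗ[R] ↑N), ModuleCat.ofHom ε, hεsurj, ?_⟩
  -- the kernel is generated by `T`
  have hX : E1Z R ↑T ((↑T →ₗ[R] ↑N) →₀ ↑T) := ext1Zero_to_E1Z R (hT.2.1 _)
  have hlift : ∀ h : ↑T →ₗ[R] ↑N,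
      ∃ g : ↑T →ₗ[R] ((↑T →ₗ[R] ↑N) →₀ ↑T), ∀ t, ε (g t) = h t :=
    fun h => ⟨Finsupp.lsingle h, fun t => by simpa using εsingle h t⟩
  have hK : E1Z R ↑T ↥K :=
    E1Z_of_lift hX ε K.subtype (Subtype.val_injective) (Submodule.range_subtype K) hlift
  obtain ⟨T₀, T₁, i₀, p₀, hi₀, hp₀, hker₀, hA₀, hA₁⟩ := hT.2.2
  obtain ⟨μ, ι₁, r₁, hret₁⟩ := hA₁
  have hret₁' : ∀ x : ↑T₁, r₁ (ι₁ x) = x := fun x => LinearMap.congr_fun (congrArg ModuleCat.Hom.hom hret₁) x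
  have hK1 : E1Z R (μ →₀ ↑T) ↥K := E1Z_finsupp hK μ
  have hKT₁ : E1Z R ↑T₁ ↥K := E1Z_retract hK1 ι₁.hom r₁.hom hret₁'
  set i₀' : R →ₗ[R] ↑T₀ := i₀.hom with hi₀'def
  have hext : ∀ k : ↥K, ∃ φ : ↑T₀ →ₗ[R] ↥K, φ (i₀' 1) = k := fun k =>
    extend_elem i₀' p₀.hom hi₀ hp₀ hker₀ hKT₁ k
  choose φ hφ using hext
  obtain ⟨ν, iA, rA, hretA⟩ := hA₀
  have hretA' : ∀ x : ↑T₀, rA (iA x) = x := fun x => LinearMap.congr_fun (congrArg ModuleCat.Hom.hom hretA) x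
  set F : ((↥K × ν) →₀ ↑T) →ₗ[R] ↥K :=
    Finsupp.lsum ℕ (fun km => (φ km.1 ∘ₗ rA.hom) ∘ₗ Finsupp.lsingle km.2)
    with hFdef
  have hFsurj : Function.Surjective F := by
    intro k
    set Ek : (ν →₀ ↑T) →ₗ[R] ((↥K × ν) →₀ ↑T) :=
      Finsupp.lsum ℕ (fun m => Finsupp.lsingle (k, m)) with hEkdef
    have hcomp : F ∘ₗ Ek = φ k ∘ₗ rA.hom := by
      apply Finsupp.lhom_ext
      intro m t
      simp only [hFdef, hEkdef, LinearMap.coe_comp, Function.comp_apply,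
        Finsupp.coe_lsum, Finsupp.sum_single_index, map_zero, Finsupp.lsingle_apply]
    refine ⟨Ek (iA (i₀' 1)), (LinearMap.congr_fun hcomp (iA (i₀' 1))).trans ?_⟩
    show φ k (rA (iA (i₀' 1))) = k
    rw [hretA', hφ]
  exact ⟨(↥K × ν), ModuleCat.ofHom F, hFsurj⟩

/-- if `T` is 1-tilting, every `M ∈ Pres(T)` admits a short exact
sequence `0 → K → T₀ → M → 0` with `T₀ ∈ Add T` and `K ∈ Pres(T)`. -/
theorem stmt15 (T : ModuleCat R) (hT : IsTiltingM R T) :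
    ∀ M : ModuleCat R, PresM R T M →
      ∃ (K T₀ : ModuleCat R) (i : K ⟶ T₀) (p : T₀ ⟶ M),
        Function.Injective i ∧ Function.Surjective p ∧
        LinearMap.range i.hom = LinearMap.ker p.hom ∧
        InAddM R T T₀ ∧ PresM R T K := by
  intro M hM
  obtain ⟨ι, f, hf, hgen⟩ := hM
  refine ⟨ModuleCat.of R ↥(LinearMap.ker f.hom), ModuleCat.of R (ι →₀ ↑T),
    ModuleCat.ofHom (LinearMap.ker f.hom).subtype, f, Subtype.val_injective, hf,
    Submodule.range_subtype _, ⟨ι, 𝟙 _, 𝟙 _, by simp⟩, ?_⟩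
  exact gen_to_pres R T hT _ hgen
end

section
/- Let R be a ring and X a class of right R-modules such that X ∩ ^⊥X is closed under arbitrary direct sums and X is closed under cokernels of monomorphisms (if 0 → A → B → C → 0 is exact with A,B ∈ X then C ∈ X). Then X ∩ ^⊥X is closed under direct summands. -/
open CategoryTheory

variable (R : Type) [Ring R]

/-- Eilenberg swindle: if `X ∩ ^⊥X` is closed under arbitrary direct
sums and `X` is closed under cokernels of monomorphisms, then `X ∩ ^⊥X` is closed
under direct summands. -/
theorem stmt17 (𝒳 : ModuleCat R → Prop)
    (hds : ∀ (ι : Type) (f : ι → ModuleCat R),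
      (∀ i : ι, 𝒳 (f i) ∧ (∀ X : ModuleCat R, 𝒳 X → Ext1Zero R (f i) X)) →
      (𝒳 (ModuleCat.of R (DirectSum ι (fun i => f i))) ∧
        (∀ X : ModuleCat R, 𝒳 X →
          Ext1Zero R (ModuleCat.of R (DirectSum ι (fun i => f i))) X)))
    (hclo : ∀ (A B C : ModuleCat R) (f : A ⟶ B) (g : B ⟶ C),
      Function.Injective f → Function.Surjective g →
      LinearMap.range f.hom = LinearMap.ker g.hom → 𝒳 A → 𝒳 B → 𝒳 C) :
    ∀ (M N : ModuleCat R) (i : M ⟶ N) (r : N ⟶ M), i ≫ r = 𝟙 M →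
      (𝒳 N ∧ (∀ X : ModuleCat R, 𝒳 X → Ext1Zero R N X)) →
      (𝒳 M ∧ (∀ X : ModuleCat R, 𝒳 X → Ext1Zero R M X)) := by
  intro M N i r hir hN
  have hri : ∀ m : M, r (i m) = m := by
    intro m
    have := congrArg (fun f => f.hom m) hir
    simpa using this
  constructor
  · -- 𝒳 M, via the Eilenberg swindle
    set e : (↑N) →ₗ[R] N := i.hom.comp r.hom with he_def
    have hee : ∀ n : N, e (e n) = e n := by
      intro n; simp [he_def, LinearMap.comp_apply, hri]
    have hre : ∀ n : N, r (e n) = r n := by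
      intro n; simp [he_def, LinearMap.comp_apply, hri]
    let lof : ∀ k : ℕ, (↑N) →ₗ[R] DirectSum ℕ (fun _ => (↑N)) :=
      fun k => DirectSum.lof R ℕ (fun _ => (↑N)) k
    -- f : D → D,  f(δ_k n) = δ_k (n - e n) + δ_{k+1} (e n)
    let f : DirectSum ℕ (fun _ => (↑N)) →ₗ[R] DirectSum ℕ (fun _ => (↑N)) :=
      DirectSum.toModule R ℕ _ (fun k => (lof k).comp (LinearMap.id - e) + (lof (k+1)).comp e)
    -- A : D → D,  A(δ_0 n) = δ_0 (n - e n),  A(δ_{k+1} n) = δ_{k+1} (n - e n) + δ_k (e n)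
    let A : DirectSum ℕ (fun _ => (↑N)) →ₗ[R] DirectSum ℕ (fun _ => (↑N)) :=
      DirectSum.toModule R ℕ _ (fun k =>
        Nat.rec ((lof 0).comp (LinearMap.id - e))
          (fun j _ => (lof (j+1)).comp (LinearMap.id - e) + (lof j).comp e) k)
    -- q : D → M,  q(x) = r(x 0)
    let q : DirectSum ℕ (fun _ => (↑N)) →ₗ[R] (↑M) :=
      r.hom.comp (DirectSum.component R ℕ (fun _ => (↑N)) 0)
    have hq_lof : ∀ (k : ℕ) (n : N), q (lof k n) = if k = 0 then r n else 0 := by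
      intro k n
      simp only [q, LinearMap.comp_apply, lof, DirectSum.component.of]
      rcases k with _ | k <;> simp
    have hf_lof : ∀ (k : ℕ) (n : N), f (lof k n) = lof k (n - e n) + lof (k+1) (e n) := by
      intro k n
      simp [f, lof, DirectSum.toModule_lof, LinearMap.add_apply, LinearMap.comp_apply,
        LinearMap.sub_apply]
    have hA_lof0 : ∀ n : N, A (lof 0 n) = lof 0 (n - e n) := by
      intro n
      simp [A, lof, DirectSum.toModule_lof, LinearMap.comp_apply, LinearMap.sub_apply]
    have hA_lofS : ∀ (k : ℕ) (n : N), A (lof (k+1) n) = lof (k+1) (n - e n) + lof k (e n) := by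
      intro k n
      simp [A, lof, DirectSum.toModule_lof, LinearMap.add_apply, LinearMap.comp_apply,
        LinearMap.sub_apply]
    have hesub : ∀ n : N, e (n - e n) = 0 := by
      intro n; rw [map_sub, hee, sub_self]
    -- A ∘ f = id
    have hAf : ∀ x, A (f x) = x := by
      have hcomp : A.comp f = LinearMap.id := by
        apply DirectSum.linearMap_ext
        intro k
        apply LinearMap.ext
        intro n
        simp only [LinearMap.comp_apply, LinearMap.id_apply]
        rcases k with _ | j <;>
          simp only [hf_lof, map_add, hA_lof0, hA_lofS, map_sub, hee, lof] <;> abel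
      intro x
      have := congrArg (fun g => (g : _ →ₗ[R] _) x) hcomp
      simpa using this
    -- q ∘ f = 0
    have hqf : ∀ x, q (f x) = 0 := by
      have hcomp : q.comp f = 0 := by
        apply DirectSum.linearMap_ext
        intro k
        apply LinearMap.ext
        intro n
        simp only [LinearMap.comp_apply, LinearMap.zero_apply]
        rcases k with _ | j <;>
          simp [hf_lof, map_add, hq_lof, map_sub, hre, lof]
      intro x
      have := congrArg (fun g => (g : _ →ₗ[R] _) x) hcomp
      simpa using this
    -- lof 0 ∘ i ∘ q + f ∘ A = id
    have hrec : ∀ x, lof 0 (i (q x)) + f (A x) = x := by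
      have hcomp : ((lof 0).comp (i.hom.comp q)) + f.comp A = LinearMap.id := by
        apply DirectSum.linearMap_ext
        intro k
        apply LinearMap.ext
        intro n
        simp only [LinearMap.add_apply, LinearMap.comp_apply, LinearMap.id_apply]
        have hir' : ∀ n : (↑N), i (r n) = e n := fun _ => rfl
        rcases k with _ | j <;>
          simp only [hq_lof, hA_lof0, hA_lofS, hf_lof, map_add, map_sub, map_zero, hee, hir',
            if_pos, if_neg (Nat.succ_ne_zero _), reduceIte, lof] <;> abel
      intro x
      have := congrArg (fun g => (g : _ →ₗ[R] _) x) hcomp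
      simpa using this
    have hDmem := hds ℕ (fun _ => N) (fun _ => hN)
    refine hclo (ModuleCat.of R (DirectSum ℕ (fun _ => (↑N))))
      (ModuleCat.of R (DirectSum ℕ (fun _ => (↑N)))) M (ModuleCat.ofHom f) (ModuleCat.ofHom q) ?_ ?_ ?_ hDmem.1 hDmem.1
    · intro x y hxy
      rw [← hAf x, ← hAf y]
      exact congrArg A hxy
    · intro m
      refine ⟨lof 0 (i m), ?_⟩
      show q (lof 0 (i m)) = m
      rw [hq_lof, if_pos rfl, hri]
    · show LinearMap.range f = LinearMap.ker q
      apply le_antisymm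
      · rintro x ⟨y, rfl⟩
        exact hqf y
      · intro x hx
        have hx0 : q x = 0 := hx
        refine ⟨A x, ?_⟩
        show f (A x) = x
        have := hrec x
        rw [hx0, map_zero, map_zero, zero_add] at this
        exact this
  · -- Ext¹(M, X) = 0 for X ∈ 𝒳, by pulling back along r
    intro X hX B j p hj hp hex
    let φ : (↑B) × (↑N) → Prop := fun _ => True
    let K : Submodule R ((↑B) × (↑N)) :=
      LinearMap.ker (p.hom.comp (LinearMap.fst R B N)
        - r.hom.comp (LinearMap.snd R B N))
    have hKmem : ∀ u : (↑B) × (↑N), u ∈ K ↔ p u.1 = r u.2 := by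
      intro u
      simp [K, LinearMap.mem_ker, sub_eq_zero]
    let PM : ModuleCat R := ModuleCat.of R K
    have hpj : ∀ x : X, p (j x) = 0 := by
      intro x
      have : j x ∈ LinearMap.ker p.hom := by rw [← hex]; exact ⟨x, rfl⟩
      exact this
    let j' : (↑X) →ₗ[R] K :=
      LinearMap.codRestrict K (LinearMap.prod j.hom 0)
        (fun x => by rw [hKmem]; simp [hpj x])
    let π : K →ₗ[R] (↑N) := (LinearMap.snd R B N).comp K.subtype
    have hπsurj : Function.Surjective π := by
      intro n
      obtain ⟨b, hb⟩ := hp (r n)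
      exact ⟨⟨(b, n), (hKmem _).mpr hb⟩, rfl⟩
    have hj'inj : Function.Injective j' := by
      intro x y hxy
      apply hj
      have := congrArg (fun u : K => (u : (↑B) × (↑N)).1) hxy
      exact this
    have hexact : LinearMap.range j' = LinearMap.ker π := by
      apply le_antisymm
      · rintro u ⟨x, rfl⟩
        show (((j x, 0) : (↑B) × (↑N)) : _).2 = 0
        rfl
      · rintro ⟨⟨b, n⟩, hu⟩ hker
        have hn : n = 0 := hker
        have hb : p b = 0 := by
          have := (hKmem (b, n)).mp hu
          rw [hn, map_zero] at this
          exact this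
        have : b ∈ LinearMap.range j.hom := by rw [hex]; exact hb
        obtain ⟨x, hx⟩ := this
        refine ⟨x, ?_⟩
        apply Subtype.ext
        show ((j x, 0) : (↑B) × (↑N)) = (b, n)
        rw [hx, hn]
    obtain ⟨s', hs'⟩ := hN.2 X hX PM (ModuleCat.ofHom j') (ModuleCat.ofHom π) hj'inj hπsurj hexact
    have hs'π : ∀ n : N, π (s' n) = n := by
      intro n
      have := congrArg (fun g => g.hom n) hs'
      simpa using this
    refine ⟨ModuleCat.ofHom (((LinearMap.fst R B N).comp K.subtype).comp
      (s'.hom.comp i.hom)), ?_⟩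
    apply ModuleCat.hom_ext
    apply LinearMap.ext
    intro m
    have u : K := s' (i m)
    show p ((show K from s' (i m)).val.1) = m
    have hmem := (hKmem (show K from s' (i m)).val).mp (show K from s' (i m)).2
    have hsnd : ((show K from s' (i m)).val.2) = i m := hs'π (i m)
    rw [hmem, hsnd, hri]
end
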